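/- Under the power asymmetry specification, the c.d.f. of the winning bid conditional on bidder i winning is Ψ_i ∘ F; that is, for every real w, P(max_{j≠i} V_j ≤ w | V_i > max_{j≠i} V_j) = Ψ_i(F(w)), where Ψ_i(τ) = (Λ_N · τ^{Λ_{N|i}} − Λ_{N|i} · τ^{Λ_N}) / λ_i. -/

import Mathlib

open MeasureTheory ProbabilityTheory Set Filter
open scoped ENNReal NNReal

lemma pwa_intcalc {b : ℝ} (hb : 0 < b) {c : ℝ} (hc : 0 ≤ c) :
    ∫⁻ u in Set.Ioc (0:ℝ) c, ENNReal.ofReal (b * u ^ (b - 1)) = ENNReal.ofReal (c ^ b) := by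
  have hint : IntegrableOn (fun u : ℝ => b * u ^ (b - 1)) (Set.Ioc 0 c) := by
    have := (intervalIntegral.intervalIntegrable_rpow' (a := 0) (b := c)
      (show (-1:ℝ) < b - 1 by linarith)).const_mul b
    rwa [intervalIntegrable_iff_integrableOn_Ioc_of_le hc] at this
  rw [← ofReal_integral_eq_lintegral_ofReal hint ?_]
  · congr 1
    rw [← intervalIntegral.integral_of_le hc, intervalIntegral.integral_const_mul,
      integral_rpow (Or.inl (by linarith))]
    have h1 : b - 1 + 1 = b := by ring
    rw [h1, Real.zero_rpow hb.ne']
    field_simp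
    simp
  · filter_upwards [ae_restrict_mem measurableSet_Ioc] with u hu
    exact mul_nonneg hb.le (Real.rpow_nonneg hu.1.le _)

lemma pwa_core (F : ℝ → ℝ) (hFmono : Monotone F) (hFcont : Continuous F)
    (hF0 : Tendsto F atBot (nhds 0)) (hF1 : Tendsto F atTop (nhds 1))
    (ρ : Measure ℝ) [IsProbabilityMeasure ρ]
    {lam : ℝ} (hlam : 0 < lam) (hρ : ∀ x, ρ (Set.Iic x) = ENNReal.ofReal (F x ^ lam))
    {a : ℝ} (ha : 0 < a) (w : ℝ) :
    ∫⁻ x in Set.Iic w, ENNReal.ofReal (F x ^ a) ∂ρ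
      = ENNReal.ofReal (lam / (a + lam) * F w ^ (a + lam)) := by
  have hF0' : ∀ x, 0 ≤ F x := fun x => hFmono.le_of_tendsto hF0 x
  have hF1' : ∀ x, F x ≤ 1 := fun x => hFmono.ge_of_tendsto hF1 x
  -- structure of sublevel sets of F
  have hsub : ∀ t : ℝ, 0 ≤ t → t < 1 → ρ {x | F x ≤ t} = ENNReal.ofReal (t ^ lam) := by
    intro t ht0 ht1
    by_cases hne : {x | F x ≤ t}.Nonempty
    · have hbdd : BddAbove {x | F x ≤ t} := by
        obtain ⟨y, hy⟩ := (hF1.eventually (eventually_gt_nhds ht1)).exists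
        refine ⟨y, fun x hx => ?_⟩
        by_contra hxy
        exact absurd (hFmono (le_of_not_ge hxy)) (by simp only [mem_setOf_eq] at hx; linarith)
      have hclosed : IsClosed {x | F x ≤ t} := isClosed_le hFcont continuous_const
      set s := sSup {x | F x ≤ t} with hs
      have hmem : s ∈ {x | F x ≤ t} := hclosed.csSup_mem hne hbdd
      have hset : {x | F x ≤ t} = Set.Iic s := by
        ext x
        constructor
        · exact fun hx => le_csSup hbdd hx
        · exact fun hx => le_trans (hFmono hx) hmem
      have hFs : F s = t := by
        rcases eq_or_lt_of_le ht0 with h0 | h0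
        · have := hF0' s
          have : F s = 0 := le_antisymm (by simpa [← h0] using hmem) (hF0' s)
          rw [this, ← h0]
        · -- F s ≥ t : points just above s have F > t
          refine le_antisymm hmem ?_
          have htend : Tendsto (fun n : ℕ => F (s + 1 / (n + 1))) atTop (nhds (F s)) := by
            refine (hFcont.continuousAt.tendsto).comp ?_
            have : Tendsto (fun n : ℕ => s + 1 / ((n : ℝ) + 1)) atTop (nhds (s + 0)) :=
              tendsto_const_nhds.add tendsto_one_div_add_atTop_nhds_zero_nat
            simpa using this
          refine ge_of_tendsto htend (Eventually.of_forall fun n => ?_)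
          by_contra hlt
          push_neg at hlt
          have : s + 1 / ((n : ℝ) + 1) ∈ {x | F x ≤ t} := hlt.le
          have := le_csSup hbdd this
          have hpos : (0:ℝ) < 1 / ((n : ℝ) + 1) := by positivity
          linarith
      rw [hset, hρ, hFs]
    · rw [Set.not_nonempty_iff_eq_empty] at hne
      have ht : t = 0 := by
        by_contra h
        have ht0' : 0 < t := lt_of_le_of_ne ht0 (Ne.symm h)
        obtain ⟨y, hy⟩ := (hF0.eventually (eventually_lt_nhds ht0')).exists
        exact absurd (Set.eq_empty_iff_forall_notMem.mp hne y) (by simp [hy.le])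
      rw [hne, ht, Real.zero_rpow hlam.ne']
      simp
  -- the pushforward of ρ under F
  set f : ℝ → ℝ≥0∞ := fun t => ENNReal.ofReal (lam * t ^ (lam - 1)) with hfdef
  have hfmeas : Measurable f :=
    ENNReal.measurable_ofReal.comp (measurable_const.mul (measurable_id.pow measurable_const))
  set κ : Measure ℝ := (volume.restrict (Set.Ioc (0:ℝ) 1)).withDensity f with hκdef
  have hκIic : ∀ t : ℝ, κ (Set.Iic t) = ENNReal.ofReal ((max 0 (min t 1)) ^ lam) := by
    intro t
    have h1 : κ (Set.Iic t) = ∫⁻ u in Set.Iic t ∩ Set.Ioc 0 1, f u := by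
      rw [hκdef, withDensity_apply _ measurableSet_Iic,
        Measure.restrict_restrict measurableSet_Iic]
    have h2 : Set.Iic t ∩ Set.Ioc (0:ℝ) 1 = Set.Ioc 0 (min t 1) := by
      ext u
      simp only [Set.mem_inter_iff, Set.mem_Iic, Set.mem_Ioc, le_min_iff]
      tauto
    rw [h1, h2]
    rcases le_or_gt 0 t with ht | ht
    · have hmax : max 0 (min t 1) = min t 1 := max_eq_right (le_min ht zero_le_one)
      rw [hmax, pwa_intcalc hlam (le_min ht zero_le_one)]
    · have he : Set.Ioc (0:ℝ) (min t 1) = ∅ :=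
        Set.Ioc_eq_empty (by rw [not_lt]; exact (min_le_left t 1).trans ht.le)
      rw [he, Measure.restrict_empty, lintegral_zero_measure]
      have hmax : max 0 (min t 1) = 0 := max_eq_left ((min_le_left t 1).trans ht.le)
      rw [hmax, Real.zero_rpow hlam.ne']
      simp
  have hκfin : IsFiniteMeasure κ := by
    constructor
    have huniv : κ Set.univ = ENNReal.ofReal ((1:ℝ) ^ lam) := by
      rw [hκdef, withDensity_apply _ MeasurableSet.univ, setLIntegral_univ]
      exact pwa_intcalc hlam zero_le_one
    rw [huniv]; exact ENNReal.ofReal_lt_top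
  have hFmeas : Measurable F := hFcont.measurable
  have hρFprob : IsProbabilityMeasure (ρ.map F) := Measure.isProbabilityMeasure_map hFmeas.aemeasurable
  have hmapF : ρ.map F = κ := by
    refine Measure.ext_of_Iic (ρ.map F) κ (fun t => ?_)
    rw [Measure.map_apply hFmeas measurableSet_Iic, hκIic]
    have hpre : F ⁻¹' Set.Iic t = {x | F x ≤ t} := rfl
    rw [hpre]
    rcases lt_or_ge t 0 with ht | ht
    · have he : {x | F x ≤ t} = ∅ := by
        ext x; simp only [Set.mem_setOf_eq, Set.mem_empty_iff_false, iff_false, not_le]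
        exact lt_of_lt_of_le ht (hF0' x)
      rw [he, measure_empty]
      have hm : max 0 (min t 1) = 0 := max_eq_left ((min_le_left t 1).trans ht.le)
      rw [hm, Real.zero_rpow hlam.ne']; simp
    · rcases lt_or_ge t 1 with ht1 | ht1
      · rw [hsub t ht ht1]
        have : max 0 (min t 1) = t := by
          rw [min_eq_left ht1.le]; exact max_eq_right ht
        rw [this]
      · have he : {x | F x ≤ t} = Set.univ := by
          ext x; simp only [Set.mem_setOf_eq, Set.mem_univ, iff_true]
          exact le_trans (hF1' x) ht1
        rw [he, measure_univ]
        have : max 0 (min t 1) = 1 := by rw [min_eq_right ht1]; simp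
        rw [this, Real.one_rpow]; simp
  -- the null exceptional set
  have hD : ρ {x | w < x ∧ F x ≤ F w} = 0 := by
    by_cases hw1 : F w = 1
    · refine measure_mono_null (t := (Set.Iic w)ᶜ) (fun x hx => ?_) ?_
      · exact (Set.mem_compl_iff _ _).mpr (not_le.mpr hx.1)
      · rw [measure_compl measurableSet_Iic (measure_ne_top ρ _), hρ, hw1, Real.one_rpow]
        simp
    · have hw1' : F w < 1 := lt_of_le_of_ne (hF1' w) hw1
      have hne : {x | F x ≤ F w}.Nonempty := ⟨w, show F w ≤ F w from le_rfl⟩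
      have hbdd : BddAbove {x | F x ≤ F w} := by
        obtain ⟨y, hy⟩ := (hF1.eventually (eventually_gt_nhds hw1')).exists
        refine ⟨y, fun x hx => ?_⟩
        by_contra hxy
        exact absurd (hFmono (le_of_not_ge hxy)) (by simp only [Set.mem_setOf_eq] at hx; linarith)
      have hclosed : IsClosed {x | F x ≤ F w} := isClosed_le hFcont continuous_const
      set s := sSup {x | F x ≤ F w} with hs
      have hmem : F s ≤ F w := hclosed.csSup_mem hne hbdd
      have hws : w ≤ s := le_csSup hbdd (le_refl (F w))
      have hFs : F s = F w := le_antisymm hmem (hFmono hws)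
      refine measure_mono_null (t := Set.Ioc w s) (fun x hx => ?_) ?_
      · exact ⟨hx.1, le_csSup hbdd hx.2⟩
      · have : Set.Ioc w s = Set.Iic s \ Set.Iic w := (Set.Iic_sdiff_Iic).symm
        rw [this, measure_diff (Set.Iic_subset_Iic.2 hws) nullMeasurableSet_Iic
          (measure_ne_top ρ _), hρ, hρ, hFs]
        simp
  -- main computation
  have hga : Measurable fun t : ℝ => ENNReal.ofReal (t ^ a) :=
    ENNReal.measurable_ofReal.comp (measurable_id.pow measurable_const)
  have hind : Measurable ((Set.Iic (F w)).indicator fun t : ℝ => ENNReal.ofReal (t ^ a)) :=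
    hga.indicator measurableSet_Iic
  have hae : (fun x => (Set.Iic w).indicator (fun x => ENNReal.ofReal (F x ^ a)) x)
      =ᵐ[ρ] fun x => (Set.Iic (F w)).indicator (fun t => ENNReal.ofReal (t ^ a)) (F x) := by
    rw [Filter.eventuallyEq_iff_exists_mem]
    refine ⟨{x | w < x ∧ F x ≤ F w}ᶜ, ?_, fun x hx => ?_⟩
    · rw [mem_ae_iff, compl_compl]; exact hD
    · simp only [Set.mem_compl_iff, Set.mem_setOf_eq, not_and, not_le] at hx
      show (Set.Iic w).indicator (fun x => ENNReal.ofReal (F x ^ a)) x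
        = (Set.Iic (F w)).indicator (fun t => ENNReal.ofReal (t ^ a)) (F x)
      rcases le_or_gt x w with hxw | hxw
      · rw [Set.indicator_of_mem (Set.mem_Iic.2 hxw),
          Set.indicator_of_mem (Set.mem_Iic.2 (hFmono hxw))]
      · rw [Set.indicator_of_notMem (by simpa using hxw),
          Set.indicator_of_notMem (by simpa using hx hxw)]
  calc ∫⁻ x in Set.Iic w, ENNReal.ofReal (F x ^ a) ∂ρ
      = ∫⁻ x, (Set.Iic w).indicator (fun x => ENNReal.ofReal (F x ^ a)) x ∂ρ := by
        rw [lintegral_indicator measurableSet_Iic]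
    _ = ∫⁻ x, (Set.Iic (F w)).indicator (fun t => ENNReal.ofReal (t ^ a)) (F x) ∂ρ :=
        lintegral_congr_ae hae
    _ = ∫⁻ t, (Set.Iic (F w)).indicator (fun t => ENNReal.ofReal (t ^ a)) t ∂(ρ.map F) :=
        (lintegral_map hind hFmeas).symm
    _ = ∫⁻ t in Set.Iic (F w), ENNReal.ofReal (t ^ a) ∂κ := by
        rw [hmapF, lintegral_indicator measurableSet_Iic]
    _ = ENNReal.ofReal (lam / (a + lam) * F w ^ (a + lam)) := by
        rw [hκdef, restrict_withDensity measurableSet_Iic,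
          Measure.restrict_restrict measurableSet_Iic,
          lintegral_withDensity_eq_lintegral_mul _ hfmeas hga]
        have h2 : Set.Iic (F w) ∩ Set.Ioc (0:ℝ) 1 = Set.Ioc 0 (F w) := by
          ext u
          simp only [Set.mem_inter_iff, Set.mem_Iic, Set.mem_Ioc]
          constructor
          · rintro ⟨h1, h2, h3⟩; exact ⟨h2, h1⟩
          · rintro ⟨h1, h2⟩; exact ⟨h2, h1, le_trans h2 (hF1' w)⟩
        rw [h2]
        have hcong : ∫⁻ u in Set.Ioc (0:ℝ) (F w), (f * fun t => ENNReal.ofReal (t ^ a)) u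
            = ∫⁻ u in Set.Ioc (0:ℝ) (F w),
              ENNReal.ofReal (lam / (a + lam)) * ENNReal.ofReal ((a + lam) * u ^ (a + lam - 1)) := by
          refine setLIntegral_congr_fun measurableSet_Ioc
            (fun u hu => ?_)
          simp only [hfdef, Pi.mul_apply]
          rw [← ENNReal.ofReal_mul (mul_nonneg hlam.le (Real.rpow_nonneg hu.1.le _)),
            ← ENNReal.ofReal_mul (by positivity)]
          congr 1
          have hrw : u ^ (lam - 1) * u ^ a = u ^ (a + lam - 1) := by
            rw [← Real.rpow_add hu.1]; ring_nf
          have hne : a + lam ≠ 0 := by positivity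
          field_simp
          exact hrw
        rw [hcong, lintegral_const_mul' _ _ ENNReal.ofReal_ne_top,
          pwa_intcalc (by positivity : (0:ℝ) < a + lam) (hF0' w),
          ← ENNReal.ofReal_mul (by positivity)]

lemma pwa_Iio {Ω : Type*} [MeasurableSpace Ω] (μ : Measure Ω)
    (F : ℝ → ℝ) (hFcont : Continuous F) {lam : ℝ} (hlam : 0 < lam)
    (X : Ω → ℝ) (h : ∀ v, μ {ω | X ω ≤ v} = ENNReal.ofReal (F v ^ lam)) (x : ℝ) :
    μ {ω | X ω < x} = ENNReal.ofReal (F x ^ lam) := by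
  have hmono : Monotone fun n : ℕ => {ω | X ω ≤ x - 1 / (n + 1)} := by
    intro n m hnm ω hω
    simp only [Set.mem_setOf_eq] at *
    have h1 : 1 / ((m:ℝ) + 1) ≤ 1 / ((n:ℝ) + 1) := by
      apply one_div_le_one_div_of_le (by positivity)
      exact add_le_add_left (Nat.cast_le.2 hnm) 1
    linarith
  have hunion : ⋃ n : ℕ, {ω | X ω ≤ x - 1 / (n + 1)} = {ω | X ω < x} := by
    ext ω
    simp only [Set.mem_iUnion, Set.mem_setOf_eq]
    constructor
    · rintro ⟨n, hn⟩
      have : (0:ℝ) < 1 / ((n:ℝ) + 1) := by positivity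
      linarith
    · intro hω
      obtain ⟨n, hn⟩ := exists_nat_one_div_lt (sub_pos.2 hω)
      exact ⟨n, by linarith⟩
  have htend := tendsto_measure_iUnion_atTop (μ := μ) hmono
  rw [hunion] at htend
  have htend2 : Tendsto (fun n : ℕ => μ {ω | X ω ≤ x - 1 / (n + 1)}) atTop
      (nhds (ENNReal.ofReal (F x ^ lam))) := by
    simp only [h]
    have hx : Tendsto (fun n : ℕ => x - 1 / ((n:ℝ) + 1)) atTop (nhds x) := by
      have h0 : Tendsto (fun n : ℕ => 1 / ((n:ℝ) + 1)) atTop (nhds 0) :=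
        tendsto_one_div_add_atTop_nhds_zero_nat
      have h1 := (tendsto_const_nhds (x := x) (f := (atTop : Filter ℕ))).sub h0
      simpa using h1
    have hcont : ContinuousAt (fun t : ℝ => ENNReal.ofReal (F t ^ lam)) x :=
      (ENNReal.continuous_ofReal.continuousAt).comp
        (((Real.continuous_rpow_const hlam.le).continuousAt).comp hFcont.continuousAt)
    exact hcont.tendsto.comp hx
  exact tendsto_nhds_unique htend htend2

lemma pwa_prod {N : ℕ} (l : Fin N → ℝ) (hl : ∀ i, 0 < l i) (T : Finset (Fin N))
    {c : ℝ} (hc : 0 ≤ c) :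
    ∏ j ∈ T, ENNReal.ofReal (c ^ l j) = ENNReal.ofReal (c ^ (∑ j ∈ T, l j)) := by
  rw [← ENNReal.ofReal_prod_of_nonneg (fun j _ => Real.rpow_nonneg hc _),
    Real.rpow_sum_of_nonneg hc (fun j _ => (hl j).le)]

/-- Under the power asymmetry specification, the c.d.f. of the
winning bid conditional on bidder `i` winning is `Ψ_i ∘ F`: for every real `w`,
`P(max_{j≠i} V_j ≤ w | V_i > max_{j≠i} V_j) = Ψ_i(F(w))` where
`Ψ_i(τ) = (Λ_N τ^{Λ_{N|i}} − Λ_{N|i} τ^{Λ_N}) / λ_i`. -/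
theorem conditional_winningBid_cdf_power_asymmetry
    {Ω : Type*} [MeasurableSpace Ω] (μ : Measure Ω) [IsProbabilityMeasure μ]
    (N : ℕ) (hN : 2 ≤ N) (l : Fin N → ℝ) (hl : ∀ i, 0 < l i)
    (F : ℝ → ℝ) (hFmono : Monotone F) (hFcont : Continuous F)
    (hF0 : Filter.Tendsto F Filter.atBot (nhds 0))
    (hF1 : Filter.Tendsto F Filter.atTop (nhds 1))
    (V : Fin N → Ω → ℝ) (hVmeas : ∀ i, Measurable (V i))
    (hindep : iIndepFun V μ)
    (hcdf : ∀ i v, μ {ω | V i ω ≤ v} = ENNReal.ofReal ((F v) ^ (l i)))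
    (Ψ : Fin N → ℝ → ℝ)
    (hΨ : ∀ i τ, Ψ i τ = ((∑ j, l j) * τ ^ ((∑ j, l j) - l i)
        - ((∑ j, l j) - l i) * τ ^ (∑ j, l j)) / l i) :
    ∀ i, ∀ w : ℝ,
      (ProbabilityTheory.cond μ {ω | ∀ j, j ≠ i → V j ω < V i ω}
          {ω | ∀ j, j ≠ i → V j ω ≤ w}).toReal
        = Ψ i (F w) := by
  classical
  intro i w
  set T := Finset.univ.erase i with hTdef
  have hTne : T.Nonempty := by
    have hnt : Nontrivial (Fin N) := Fin.nontrivial_iff_two_le.mpr hN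
    obtain ⟨j, hj⟩ := exists_ne i
    exact ⟨j, Finset.mem_erase.2 ⟨hj, Finset.mem_univ j⟩⟩
  set a := ∑ j ∈ T, l j with hadef
  have haΛ : (∑ j, l j) = a + l i := by
    rw [hadef, hTdef, Finset.sum_erase_eq_sub (Finset.mem_univ i)]; ring
  have ha : 0 < a := Finset.sum_pos (fun j _ => hl j) hTne
  have hli := hl i
  have hF0' : ∀ x, 0 ≤ F x := fun x => hFmono.le_of_tendsto hF0 x
  have hF1' : ∀ x, F x ≤ 1 := fun x => hFmono.ge_of_tendsto hF1 x
  -- measurability of the conditioning event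
  have hsmeas : MeasurableSet {ω | ∀ j, j ≠ i → V j ω < V i ω} := by
    have h1 : {ω | ∀ j, j ≠ i → V j ω < V i ω} = ⋂ j, {ω | j ≠ i → V j ω < V i ω} := by
      ext ω; simp [Set.mem_iInter]
    rw [h1]
    refine MeasurableSet.iInter fun j => ?_
    by_cases hj : j = i
    · have h2 : {ω | j ≠ i → V j ω < V i ω} = Set.univ := by
        ext ω; simp [hj]
      rw [h2]; exact MeasurableSet.univ
    · have h2 : {ω | j ≠ i → V j ω < V i ω} = {ω | V j ω < V i ω} := by
        ext ω; simp [hj]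
      rw [h2]; exact measurableSet_lt (hVmeas j) (hVmeas i)
  haveI hprobVi : IsProbabilityMeasure (μ.map (V i)) :=
    Measure.isProbabilityMeasure_map (hVmeas i).aemeasurable
  -- main integral computation
  have hA : ∀ u : ℝ, μ {ω | V i ω ≤ u ∧ ∀ j, j ≠ i → V j ω < V i ω}
      = ENNReal.ofReal (l i / (a + l i) * F u ^ (a + l i)) := by
    intro u
    have hdisj : Disjoint ({i} : Finset (Fin N)) T :=
      Finset.disjoint_singleton_left.mpr (Finset.notMem_erase i _)
    have hIF0 := hindep.indepFun_finset {i} T hdisj hVmeas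
    set X : Ω → ({j // j ∈ T} → ℝ) := fun ω j => V j ω with hXdef
    have hXmeas : Measurable X := measurable_pi_lambda _ fun j => hVmeas j
    have hIF : IndepFun (V i) X μ := by
      have h := hIF0.comp
        (φ := fun v : ({j // j ∈ ({i} : Finset (Fin N))} → ℝ) =>
          v ⟨i, Finset.mem_singleton_self i⟩)
        (ψ := id) (show Measurable (fun v : ({j // j ∈ ({i} : Finset (Fin N))} → ℝ) =>
          v ⟨i, Finset.mem_singleton_self i⟩) from measurable_pi_apply _) measurable_id
      exact h
    have hmap : μ.map (fun ω => (V i ω, X ω)) = (μ.map (V i)).prod (μ.map X) :=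
      (indepFun_iff_map_prod_eq_prod_map_map (hVmeas i).aemeasurable
        hXmeas.aemeasurable).mp hIF
    set S : Set (ℝ × ({j // j ∈ T} → ℝ)) := {p | p.1 ≤ u ∧ ∀ j, p.2 j < p.1} with hSdef
    have hSmeas : MeasurableSet S := by
      have h1 : S = {p : ℝ × ({j // j ∈ T} → ℝ) | p.1 ≤ u}
          ∩ ⋂ j, {p : ℝ × ({j // j ∈ T} → ℝ) | p.2 j < p.1} := by
        ext p; simp [hSdef, Set.mem_iInter]
      rw [h1]
      exact (measurableSet_le measurable_fst measurable_const).inter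
        (MeasurableSet.iInter fun j =>
          measurableSet_lt (measurable_snd.eval) measurable_fst)
    have hEv : {ω | V i ω ≤ u ∧ ∀ j, j ≠ i → V j ω < V i ω}
        = (fun ω => (V i ω, X ω)) ⁻¹' S := by
      ext ω
      simp only [Set.mem_setOf_eq, Set.mem_preimage, hSdef, hXdef]
      constructor
      · rintro ⟨h1, h2⟩
        exact ⟨h1, fun j => h2 j (Finset.mem_erase.1 j.2).1⟩
      · rintro ⟨h1, h2⟩
        exact ⟨h1, fun j hj => h2 ⟨j, Finset.mem_erase.2 ⟨hj, Finset.mem_univ j⟩⟩⟩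
    have hslice : ∀ x : ℝ, (μ.map X) (Prod.mk x ⁻¹' S)
        = (Set.Iic u).indicator (fun x => ENNReal.ofReal (F x ^ a)) x := by
      intro x
      by_cases hx : x ≤ u
      · have hpre : Prod.mk x ⁻¹' S = {y : {j // j ∈ T} → ℝ | ∀ j, y j < x} := by
          ext y; simp [hSdef, hx]
        have hymeas : MeasurableSet {y : {j // j ∈ T} → ℝ | ∀ j, y j < x} := by
          have h1 : {y : {j // j ∈ T} → ℝ | ∀ j, y j < x} = ⋂ j, {y | y j < x} := by
            ext y; simp [Set.mem_iInter]
          rw [h1]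
          exact MeasurableSet.iInter fun j =>
            measurableSet_lt (measurable_pi_apply j) measurable_const
        have hXpre : X ⁻¹' {y : {j // j ∈ T} → ℝ | ∀ j, y j < x}
            = ⋂ j ∈ T, V j ⁻¹' Set.Iio x := by
          ext ω
          simp only [Set.mem_preimage, Set.mem_setOf_eq, Set.mem_iInter, hXdef, Set.mem_Iio]
          exact ⟨fun h j hj => h ⟨j, hj⟩, fun h j => h j j.2⟩
        rw [hpre, Set.indicator_of_mem (Set.mem_Iic.2 hx),
          Measure.map_apply hXmeas hymeas, hXpre,
          hindep.meas_biInter (fun j hj => ⟨Set.Iio x, measurableSet_Iio, rfl⟩)]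
        have hIio : ∀ j, μ (V j ⁻¹' Set.Iio x) = ENNReal.ofReal (F x ^ l j) := fun j =>
          pwa_Iio μ F hFcont (hl j) (V j) (hcdf j) x
        rw [Finset.prod_congr rfl (fun j _ => hIio j), pwa_prod l hl T (hF0' x), ← hadef]
      · have hpre : Prod.mk x ⁻¹' S = ∅ := by
          ext y; simp [hSdef, hx]
        rw [hpre, measure_empty, Set.indicator_of_notMem (by simpa using hx)]
    rw [hEv, ← Measure.map_apply ((hVmeas i).prodMk hXmeas) hSmeas, hmap,
      Measure.prod_apply hSmeas]
    calc ∫⁻ x, (μ.map X) (Prod.mk x ⁻¹' S) ∂(μ.map (V i))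
        = ∫⁻ x, (Set.Iic u).indicator (fun x => ENNReal.ofReal (F x ^ a)) x
            ∂(μ.map (V i)) := lintegral_congr hslice
      _ = ∫⁻ x in Set.Iic u, ENNReal.ofReal (F x ^ a) ∂(μ.map (V i)) := by
          rw [lintegral_indicator measurableSet_Iic]
      _ = ENNReal.ofReal (l i / (a + l i) * F u ^ (a + l i)) := by
          refine pwa_core F hFmono hFcont hF0 hF1 (μ.map (V i)) hli (fun v => ?_) ha u
          rw [Measure.map_apply (hVmeas i) measurableSet_Iic]
          exact hcdf i v
  -- probability of winning
  have hDen : μ {ω | ∀ j, j ≠ i → V j ω < V i ω} = ENNReal.ofReal (l i / (a + l i)) := by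
    have hmono : Monotone fun n : ℕ =>
        {ω | V i ω ≤ (n:ℝ) ∧ ∀ j, j ≠ i → V j ω < V i ω} := by
      intro n m hnm ω hω
      exact ⟨le_trans hω.1 (Nat.cast_le.2 hnm), hω.2⟩
    have hunion : (⋃ n : ℕ, {ω | V i ω ≤ (n:ℝ) ∧ ∀ j, j ≠ i → V j ω < V i ω})
        = {ω | ∀ j, j ≠ i → V j ω < V i ω} := by
      ext ω
      simp only [Set.mem_iUnion, Set.mem_setOf_eq]
      constructor
      · rintro ⟨n, hn⟩; exact hn.2
      · intro h
        obtain ⟨n, hn⟩ := exists_nat_ge (V i ω)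
        exact ⟨n, hn, h⟩
    have h1 := tendsto_measure_iUnion_atTop (μ := μ) hmono
    rw [hunion] at h1
    have h2 : Tendsto (fun n : ℕ => μ {ω | V i ω ≤ (n:ℝ) ∧ ∀ j, j ≠ i → V j ω < V i ω})
        atTop (nhds (ENNReal.ofReal (l i / (a + l i)))) := by
      simp only [hA]
      have hFn : Tendsto (fun n : ℕ => F (n:ℝ)) atTop (nhds 1) :=
        hF1.comp tendsto_natCast_atTop_atTop
      have hcont : ContinuousAt
          (fun c : ℝ => ENNReal.ofReal (l i / (a + l i) * c ^ (a + l i))) 1 :=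
        (ENNReal.continuous_ofReal.continuousAt).comp
          ((continuous_const.mul (Real.continuous_rpow_const (by positivity))).continuousAt)
      have h3 := hcont.tendsto.comp hFn
      simpa [Real.one_rpow, Function.comp_def] using h3
    exact tendsto_nhds_unique h1 h2
  -- the other part of the numerator
  have hNum2 : μ {ω | w < V i ω ∧ ∀ j, j ≠ i → V j ω ≤ w}
      = (1 - ENNReal.ofReal (F w ^ l i)) * ENNReal.ofReal (F w ^ a) := by
    set B : Fin N → Set ℝ := fun j => if j = i then Set.Ioi w else Set.Iic w with hBdef
    have hset : {ω | w < V i ω ∧ ∀ j, j ≠ i → V j ω ≤ w} = ⋂ j, V j ⁻¹' B j := by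
      ext ω
      simp only [Set.mem_setOf_eq, Set.mem_iInter, Set.mem_preimage, hBdef]
      constructor
      · rintro ⟨h1, h2⟩ j
        by_cases hj : j = i
        · subst hj; rw [if_pos rfl]; exact h1
        · rw [if_neg hj]; exact h2 j hj
      · intro h
        refine ⟨?_, fun j hj => ?_⟩
        · have := h i; rwa [if_pos rfl] at this
        · have := h j; rwa [if_neg hj] at this
    have hBmeas : ∀ j, MeasurableSet (B j) := by
      intro j
      by_cases hj : j = i
      · rw [hBdef]; simp only [if_pos hj]; exact measurableSet_Ioi
      · rw [hBdef]; simp only [if_neg hj]; exact measurableSet_Iic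
    rw [hset, hindep.meas_iInter (fun j => ⟨B j, hBmeas j, rfl⟩),
      ← Finset.mul_prod_erase Finset.univ _ (Finset.mem_univ i)]
    have hi' : μ (V i ⁻¹' B i) = 1 - ENNReal.ofReal (F w ^ l i) := by
      have h1 : V i ⁻¹' B i = {ω | V i ω ≤ w}ᶜ := by
        ext ω; simp [hBdef, not_le]
      have h2 : MeasurableSet {ω | V i ω ≤ w} := hVmeas i measurableSet_Iic
      rw [h1, measure_compl h2 (measure_ne_top μ _), measure_univ, hcdf]
    have hrest : ∏ j ∈ T, μ (V j ⁻¹' B j) = ENNReal.ofReal (F w ^ a) := by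
      have h1 : ∀ j ∈ T, μ (V j ⁻¹' B j) = ENNReal.ofReal (F w ^ l j) := by
        intro j hj
        have hj' := (Finset.mem_erase.1 hj).1
        have h2 : V j ⁻¹' B j = {ω | V j ω ≤ w} := by
          ext ω; simp [hBdef, hj']
        rw [h2, hcdf]
      rw [Finset.prod_congr rfl h1, pwa_prod l hl T (hF0' w), ← hadef]
    rw [hi', hrest]
  -- split the intersection
  have hsplit : {ω | ∀ j, j ≠ i → V j ω < V i ω} ∩ {ω | ∀ j, j ≠ i → V j ω ≤ w}
      = {ω | V i ω ≤ w ∧ ∀ j, j ≠ i → V j ω < V i ω}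
        ∪ {ω | w < V i ω ∧ ∀ j, j ≠ i → V j ω ≤ w} := by
    ext ω
    simp only [Set.mem_inter_iff, Set.mem_setOf_eq, Set.mem_union]
    constructor
    · rintro ⟨h1, h2⟩
      rcases le_or_gt (V i ω) w with h | h
      · exact Or.inl ⟨h, h1⟩
      · exact Or.inr ⟨h, h2⟩
    · rintro (⟨h1, h2⟩ | ⟨h1, h2⟩)
      · exact ⟨h2, fun j hj => le_trans (h2 j hj).le h1⟩
      · exact ⟨fun j hj => lt_of_le_of_lt (h2 j hj) h1, h2⟩
  have hdisj2 : Disjoint {ω | V i ω ≤ w ∧ ∀ j, j ≠ i → V j ω < V i ω}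
      {ω | w < V i ω ∧ ∀ j, j ≠ i → V j ω ≤ w} := by
    rw [Set.disjoint_left]
    rintro ω ⟨h1, _⟩ ⟨h2, _⟩
    exact absurd h1 (not_le.2 h2)
  have hmeas2 : MeasurableSet {ω | w < V i ω ∧ ∀ j, j ≠ i → V j ω ≤ w} := by
    have h1 : {ω | w < V i ω ∧ ∀ j, j ≠ i → V j ω ≤ w}
        = {ω | w < V i ω} ∩ ⋂ j, {ω | j ≠ i → V j ω ≤ w} := by
      ext ω; simp [Set.mem_iInter]
    rw [h1]
    refine (measurableSet_lt measurable_const (hVmeas i)).inter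
      (MeasurableSet.iInter fun j => ?_)
    by_cases hj : j = i
    · have h2 : {ω | j ≠ i → V j ω ≤ w} = Set.univ := by ext ω; simp [hj]
      rw [h2]; exact MeasurableSet.univ
    · have h2 : {ω | j ≠ i → V j ω ≤ w} = {ω | V j ω ≤ w} := by ext ω; simp [hj]
      rw [h2]; exact hVmeas j measurableSet_Iic
  rw [cond_apply hsmeas μ, hsplit, measure_union hdisj2 hmeas2, hA w, hNum2, hDen]
  -- now pure arithmetic
  set c := F w with hcdef
  have hc0 : 0 ≤ c := hF0' w
  have hc1 : c ≤ 1 := hF1' w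
  have hr1 : c ^ l i ≤ 1 := Real.rpow_le_one hc0 hc1 hli.le
  have hsub1 : (1 : ℝ≥0∞) - ENNReal.ofReal (c ^ l i) = ENNReal.ofReal (1 - c ^ l i) := by
    rw [← ENNReal.ofReal_one, ← ENNReal.ofReal_sub _ (Real.rpow_nonneg hc0 _)]
  have hppos : (0:ℝ) < l i / (a + l i) := by positivity
  have hq : 0 ≤ l i / (a + l i) * c ^ (a + l i) + (1 - c ^ l i) * c ^ a :=
    add_nonneg (mul_nonneg hppos.le (Real.rpow_nonneg hc0 _))
      (mul_nonneg (by linarith) (Real.rpow_nonneg hc0 _))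
  rw [hsub1, ← ENNReal.ofReal_mul (by linarith),
    ← ENNReal.ofReal_add (mul_nonneg hppos.le (Real.rpow_nonneg hc0 _))
      (mul_nonneg (by linarith) (Real.rpow_nonneg hc0 _)),
    ← ENNReal.ofReal_inv_of_pos hppos,
    ← ENNReal.ofReal_mul (inv_nonneg.2 hppos.le),
    ENNReal.toReal_ofReal (mul_nonneg (inv_nonneg.2 hppos.le) hq)]
  rw [hΨ, haΛ]
  have hexp : a + l i - l i = a := by ring
  rw [hexp]
  by_cases hc : c = 0
  · rw [hc, Real.zero_rpow hli.ne', Real.zero_rpow ha.ne',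
      Real.zero_rpow (by positivity : a + l i ≠ 0)]
    simp
  · have hcpos : 0 < c := lt_of_le_of_ne hc0 (Ne.symm hc)
    have hv : c ^ a * c ^ l i = c ^ (a + l i) := (Real.rpow_add hcpos a (l i)).symm
    have hane : a + l i ≠ 0 := by positivity
    rw [← hv]
    field_simp
    ring
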